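/- Fix I, J ≥ 2 and let A_{I,J} be the (I+J)×(IJ) nonnegative integer matrix sending a table x ∈ Z^{I×J} to its row sums and column sums: A_{I,J}x = ((Σ_j x_{ij})_{i=1..I}, (Σ_i x_{ij})_{j=1..J}). Then the set B of basic moves z^{(i,i',j,j')} = e_{ij} + e_{i'j'} − e_{ij'} − e_{i'j}, for 1 ≤ i < i' ≤ I and 1 ≤ j < j' ≤ J (where e_{ij} denotes the standard unit table), is a Markov basis for A_{I,J}. -/

import Mathlib

open Finset

/-- `B` is a Markov basis for the configuration matrix `A_{I,J}` of the independence model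
(sending a table to its row and column sums): every two nonnegative integer tables with
the same row sums and the same column sums are connected by a path of moves from `±B`
through nonnegative integer tables (equivalently, each graph `G_{t,B}` on a fiber `F_t`
is connected). -/
def IsMarkovBasisIndep {I J : ℕ} (B : Set (Fin I → Fin J → ℤ)) : Prop :=
  ∀ x y : Fin I → Fin J → ℕ,
    (∀ i, ∑ j, x i j = ∑ j, y i j) →
    (∀ j, ∑ i, x i j = ∑ i, y i j) →
    Relation.ReflTransGen
      (fun a b : Fin I → Fin J → ℕ =>
        (fun i j => (a i j : ℤ) - (b i j : ℤ)) ∈ B ∨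
        (fun i j => (b i j : ℤ) - (a i j : ℤ)) ∈ B)
      x y

/-- The set of basic moves `z^{(i,i',j,j')} = e_{ij} + e_{i'j'} - e_{ij'} - e_{i'j}`
for `i < i'`, `j < j'`. -/
def basicMovesIJ (I J : ℕ) : Set (Fin I → Fin J → ℤ) :=
  { z | ∃ (i i' : Fin I) (j j' : Fin J), i < i' ∧ j < j' ∧
    z = fun p q =>
      (if p = i ∧ q = j then 1 else 0) + (if p = i' ∧ q = j' then 1 else 0)
        - (if p = i ∧ q = j' then 1 else 0) - (if p = i' ∧ q = j then 1 else 0) }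

namespace MB
variable {I J : ℕ}

def mv (i i' : Fin I) (j j' : Fin J) : Fin I → Fin J → ℤ :=
  fun p q =>
      (if p = i ∧ q = j then 1 else 0) + (if p = i' ∧ q = j' then 1 else 0)
        - (if p = i ∧ q = j' then 1 else 0) - (if p = i' ∧ q = j then 1 else 0)

lemma sum_ind_r (j : Fin J) (c : Fin J → Prop) [DecidablePred c] :
    ∑ q, (if c q ∧ q = j then (1:ℤ) else 0) = if c j then 1 else 0 := by
  by_cases h : c j
  · rw [if_pos h, Finset.sum_congr rfl (g := fun q => if q = j then (1:ℤ) else 0)]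
    · simp
    · intro q _
      by_cases hq : q = j <;> simp [hq, h]
  · rw [if_neg h]
    apply Finset.sum_eq_zero
    intro q _
    by_cases hq : q = j <;> simp [hq, h]

lemma mv_row (i i' : Fin I) (j j' : Fin J) (p : Fin I) : ∑ q, mv i i' j j' p q = 0 := by
  simp only [mv, Finset.sum_sub_distrib, Finset.sum_add_distrib,
    sum_ind_r j (fun _ => p = i), sum_ind_r j' (fun _ => p = i'),
    sum_ind_r j' (fun _ => p = i), sum_ind_r j (fun _ => p = i')]
  ring

lemma sum_ind_c (i : Fin I) (c : Fin I → Prop) [DecidablePred c] :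
    ∑ p, (if p = i ∧ c p then (1:ℤ) else 0) = if c i then 1 else 0 := by
  by_cases h : c i
  · rw [if_pos h, Finset.sum_congr rfl (g := fun p => if p = i then (1:ℤ) else 0)]
    · simp
    · intro p _
      by_cases hp : p = i <;> simp [hp, h]
  · rw [if_neg h]
    apply Finset.sum_eq_zero
    intro p _
    by_cases hp : p = i <;> simp [hp, h]

lemma mv_col (i i' : Fin I) (j j' : Fin J) (q : Fin J) : ∑ p, mv i i' j j' p q = 0 := by
  simp only [mv, Finset.sum_sub_distrib, Finset.sum_add_distrib,
    sum_ind_c i (fun _ => q = j), sum_ind_c i' (fun _ => q = j'),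
    sum_ind_c i (fun _ => q = j'), sum_ind_c i' (fun _ => q = j)]
  ring

lemma mv_mem (i i' : Fin I) (j j' : Fin J) (hi : i ≠ i') (hj : j ≠ j') :
    mv i i' j j' ∈ basicMovesIJ I J ∨
      (fun p q => -(mv i i' j j' p q)) ∈ basicMovesIJ I J := by
  rcases hi.lt_or_gt with h1 | h1 <;> rcases hj.lt_or_gt with h2 | h2
  · exact Or.inl ⟨i, i', j, j', h1, h2, rfl⟩
  · refine Or.inr ⟨i, i', j', j, h1, h2, ?_⟩
    funext p q; simp only [mv]; ring
  · refine Or.inr ⟨i', i, j, j', h1, h2, ?_⟩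
    funext p q; simp only [mv]; ring
  · refine Or.inl ⟨i', i, j', j, h1, h2, ?_⟩
    funext p q; simp only [mv]; ring

lemma x'_cast (x : Fin I → Fin J → ℕ) (i i' : Fin I) (j j' : Fin J)
    (hii' : i ≠ i') (hjj' : j ≠ j') (h1 : 1 ≤ x i j) (h2 : 1 ≤ x i' j')
    (p : Fin I) (q : Fin J) :
    (((if p = i ∧ q = j then x i j - 1
    else if p = i' ∧ q = j' then x i' j' - 1
    else if p = i ∧ q = j' then x i j' + 1
    else if p = i' ∧ q = j then x i' j + 1
    else x p q) : ℕ) : ℤ) = (x p q : ℤ) - mv i i' j j' p q := by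
  simp only [mv]
  by_cases hpi : p = i <;> by_cases hpi' : p = i' <;>
    by_cases hqj : q = j <;> by_cases hqj' : q = j' <;>
    simp_all <;> omega

lemma key (n : ℕ) : ∀ x y : Fin I → Fin J → ℕ,
    (∑ p : Fin I × Fin J, ((x p.1 p.2 : ℤ) - y p.1 p.2).natAbs) = n →
    (∀ i, ∑ j, x i j = ∑ j, y i j) →
    (∀ j, ∑ i, x i j = ∑ i, y i j) →
    Relation.ReflTransGen
      (fun a b : Fin I → Fin J → ℕ =>
        (fun i j => (a i j : ℤ) - (b i j : ℤ)) ∈ basicMovesIJ I J ∨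
        (fun i j => (b i j : ℤ) - (a i j : ℤ)) ∈ basicMovesIJ I J)
      x y := by
  induction n using Nat.strong_induction_on with
  | _ n ih =>
  intro x y hD hrow hcol
  by_cases hxy : x = y
  · exact hxy ▸ Relation.ReflTransGen.refl
  -- find a cell where x > y
  have hex : ∃ i j, y i j < x i j := by
    by_contra h
    push_neg at h
    apply hxy
    funext i j
    exact (Finset.sum_eq_sum_iff_of_le (fun q _ => h i q)).mp (hrow i) j (mem_univ j)
  obtain ⟨i, j, hij⟩ := hex
  -- find j' in row i where x < y
  have hexj : ∃ j', x i j' < y i j' := by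
    by_contra h
    push_neg at h
    exact absurd (hrow i)
      (Finset.sum_lt_sum (fun q _ => h q) ⟨j, mem_univ j, hij⟩).ne'
  obtain ⟨j', hij'⟩ := hexj
  -- find i' in column j' where x > y
  have hexi : ∃ i', y i' j' < x i' j' := by
    by_contra h
    push_neg at h
    exact absurd (hcol j')
      (Finset.sum_lt_sum (fun p _ => (h p)) ⟨i, mem_univ i, hij'⟩).ne
  obtain ⟨i', hi'j'⟩ := hexi
  have hii' : i ≠ i' := fun h => by subst h; omega
  have hjj' : j ≠ j' := fun h => by subst h; omega
  -- the new table
  obtain ⟨x', hx'⟩ : ∃ x' : Fin I → Fin J → ℕ, x' = fun p q =>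
      if p = i ∧ q = j then x i j - 1
      else if p = i' ∧ q = j' then x i' j' - 1
      else if p = i ∧ q = j' then x i j' + 1
      else if p = i' ∧ q = j then x i' j + 1
      else x p q := ⟨_, rfl⟩
  have hdiff : ∀ p q, (x' p q : ℤ) = (x p q : ℤ) - mv i i' j j' p q := by
    intro p q
    rw [hx']
    exact x'_cast x i i' j j' hii' hjj' (by omega) (by omega) p q
  -- the edge
  have hedge : (fun p q => (x p q : ℤ) - (x' p q : ℤ)) ∈ basicMovesIJ I J ∨
      (fun p q => (x' p q : ℤ) - (x p q : ℤ)) ∈ basicMovesIJ I J := by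
    rcases mv_mem i i' j j' hii' hjj' with h | h
    · left
      have he : (fun p q => (x p q : ℤ) - (x' p q : ℤ)) = mv i i' j j' := by
        funext p q; rw [hdiff p q]; ring
      rw [he]; exact h
    · right
      have he : (fun p q => (x' p q : ℤ) - (x p q : ℤ))
          = fun p q => -(mv i i' j j' p q) := by
        funext p q; rw [hdiff p q]; ring
      rw [he]; exact h
  -- margins
  have hrow' : ∀ p, ∑ q, x' p q = ∑ q, y p q := by
    intro p
    have : ((∑ q, x' p q : ℕ) : ℤ) = ((∑ q, x p q : ℕ) : ℤ) := by
      push_cast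
      calc ∑ q, (x' p q : ℤ) = ∑ q, ((x p q : ℤ) - mv i i' j j' p q) :=
            Finset.sum_congr rfl fun q _ => hdiff p q
        _ = ∑ q, (x p q : ℤ) - ∑ q, mv i i' j j' p q := Finset.sum_sub_distrib _ _
        _ = ∑ q, (x p q : ℤ) := by rw [mv_row]; ring
    rw [← hrow p]
    exact_mod_cast this
  have hcol' : ∀ q, ∑ p, x' p q = ∑ p, y p q := by
    intro q
    have : ((∑ p, x' p q : ℕ) : ℤ) = ((∑ p, x p q : ℕ) : ℤ) := by
      push_cast
      calc ∑ p, (x' p q : ℤ) = ∑ p, ((x p q : ℤ) - mv i i' j j' p q) :=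
            Finset.sum_congr rfl fun p _ => hdiff p q
        _ = ∑ p, (x p q : ℤ) - ∑ p, mv i i' j j' p q := Finset.sum_sub_distrib _ _
        _ = ∑ p, (x p q : ℤ) := by rw [mv_col]; ring
    rw [← hcol q]
    exact_mod_cast this
  -- distance decreases
  have hdist : (∑ p : Fin I × Fin J, ((x' p.1 p.2 : ℤ) - y p.1 p.2).natAbs) < n := by
    subst hD
    have hT : ({((i:Fin I), (j:Fin J)), (i', j'), (i, j'), (i', j)} : Finset (Fin I × Fin J)) ⊆ univ :=
      subset_univ _
    rw [← Finset.sum_sdiff hT, ← Finset.sum_sdiff hT]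
    have houter : ∀ p ∈ (univ \ ({((i:Fin I), (j:Fin J)), (i', j'), (i, j'), (i', j)} : Finset (Fin I × Fin J))),
        ((x' p.1 p.2 : ℤ) - y p.1 p.2).natAbs = ((x p.1 p.2 : ℤ) - y p.1 p.2).natAbs := by
      intro p hp
      simp only [Finset.mem_sdiff, Finset.mem_insert, Finset.mem_singleton] at hp
      obtain ⟨-, hp⟩ := hp
      push_neg at hp
      obtain ⟨h1, h2, h3, h4⟩ := hp
      have : x' p.1 p.2 = x p.1 p.2 := by
        simp only [hx']
        rw [if_neg, if_neg, if_neg, if_neg]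
        · exact fun h => h4 (Prod.ext h.1 h.2)
        · exact fun h => h3 (Prod.ext h.1 h.2)
        · exact fun h => h2 (Prod.ext h.1 h.2)
        · exact fun h => h1 (Prod.ext h.1 h.2)
      rw [this]
    rw [Finset.sum_congr rfl houter]
    have hlt : ∑ p ∈ ({((i:Fin I), (j:Fin J)), (i', j'), (i, j'), (i', j)} : Finset (Fin I × Fin J)),
        ((x' p.1 p.2 : ℤ) - y p.1 p.2).natAbs <
        ∑ p ∈ ({((i:Fin I), (j:Fin J)), (i', j'), (i, j'), (i', j)} : Finset (Fin I × Fin J)),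
        ((x p.1 p.2 : ℤ) - y p.1 p.2).natAbs := by
      have e1 : (x' i j : ℤ) = (x i j : ℤ) - 1 := by
        rw [hdiff]; simp [mv, hii', hjj']
      have e2 : (x' i' j' : ℤ) = (x i' j' : ℤ) - 1 := by
        rw [hdiff]; simp [mv, hii', hjj', Ne.symm hii', Ne.symm hjj']
      have e3 : (x' i j' : ℤ) = (x i j' : ℤ) + 1 := by
        rw [hdiff]; simp [mv, hii', hjj', Ne.symm hii', Ne.symm hjj']
      have e4 : (x' i' j : ℤ) = (x i' j : ℤ) + 1 := by
        rw [hdiff]; simp [mv, hii', hjj', Ne.symm hii', Ne.symm hjj']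
      rw [Finset.sum_insert, Finset.sum_insert, Finset.sum_insert, Finset.sum_singleton,
          Finset.sum_insert, Finset.sum_insert, Finset.sum_insert, Finset.sum_singleton]
      · simp only [e1, e2, e3, e4]
        omega
      all_goals simp [Prod.ext_iff, hii', hjj', Ne.symm hii', Ne.symm hjj']
    omega
  exact Relation.ReflTransGen.head hedge (ih _ hdist x' y rfl hrow' hcol')

end MB

/-- **Basic moves form a Markov basis for the independence model.**
For `I, J ≥ 2`, the basic moves `e_{ij} + e_{i'j'} - e_{ij'} - e_{i'j}` (`i < i'`, `j < j'`)
all lie in `Ker_ℤ(A_{I,J})` and form a Markov basis for the configuration matrix `A_{I,J}`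
of the independence model for `I × J` contingency tables. -/
theorem basicMoves_isMarkovBasis {I J : ℕ} (hI : 2 ≤ I) (hJ : 2 ≤ J) :
    (∀ z ∈ basicMovesIJ I J, (∀ i, ∑ j, z i j = 0) ∧ (∀ j, ∑ i, z i j = 0)) ∧
      IsMarkovBasisIndep (basicMovesIJ I J) := by
  constructor
  · rintro z ⟨i, i', j, j', hi, hj, rfl⟩
    exact ⟨fun p => MB.mv_row i i' j j' p, fun q => MB.mv_col i i' j j' q⟩
  · intro x y hr hc
    exact MB.key _ x y rfl hr hc
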